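/- If t is a σ-term with R-context v = v₁⋯vₙ and (s, w, (wᵢ)ᵢ) is an R-renaming of the variables of v (i.e., s assigns to each vᵢ a term of matching type, wᵢ is an R-context for s(vᵢ), and w is an R-context for w₁⋯wₙ), then w is an R-context for the substituted term s(t). -/
import Mathlib



/-- The element of `Fin (∑ i, k i)` determined by block `p.1` and offset `p.2`. -/
def sigmaToFin {n : ℕ} {k : Fin n → ℕ} (p : (i : Fin n) × Fin (k i)) : Fin (∑ i, k i) :=
  ⟨(∑ j ∈ Finset.univ.filter fun j => j < p.1, k j) + p.2.val, by
    have hsub := Finset.sum_le_sum_of_subset (f := k)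
      (Finset.subset_univ (insert p.1 (Finset.univ.filter fun j => j < p.1)))
    rw [Finset.sum_insert (by simp)] at hsub
    have := p.2.isLt
    omega⟩

/-- Decomposition of an element of `Fin (∑ i, k i)` into a block index and an offset. -/
def finToSigma {n : ℕ} {k : Fin n → ℕ} (p : Fin (∑ i, k i)) : (i : Fin n) × Fin (k i) :=
  (List.ofFn fun i => List.ofFn fun x : Fin (k i) =>
    (⟨i, x⟩ : (i : Fin n) × Fin (k i))).flatten.get (Fin.cast (by simp [Function.comp_def, List.sum_ofFn]) p)

/-- Coproduct of two functions between finite ordinals, acting blockwise. -/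
def coprodMap {m₁ n₁ m₂ n₂ : ℕ} (f : Fin m₁ → Fin n₁) (g : Fin m₂ → Fin n₂) :
    Fin (m₁ + m₂) → Fin (n₁ + n₂) :=
  finSumFinEquiv ∘ Sum.map f g ∘ finSumFinEquiv.symm

/-- The similarity component `θ'_{k₁,…,kₙ}` of `θ : [m] → [n]`. -/
def simComp {m n : ℕ} (θ : Fin m → Fin n) (k : Fin n → ℕ) :
    Fin (∑ i, k (θ i)) → Fin (∑ j, k j) :=
  fun p => sigmaToFin ⟨θ (finToSigma p).1, (finToSigma p).2⟩

/-- Cardinality of the fiber of `f` over `i`. -/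
def fiberCard {m n : ℕ} (f : Fin m → Fin n) (i : Fin n) : ℕ :=
  (Finset.univ.filter fun x => f x = i).card

/-- A structure category: a wide subcategory of `FinOrd` closed under coproducts of
morphisms and under similarity components. -/
structure IsStructCat (Δ : ∀ m n : ℕ, Set (Fin m → Fin n)) : Prop where
  id_mem : ∀ n, id ∈ Δ n n
  comp_mem : ∀ {k m n : ℕ} (f : Fin k → Fin m) (g : Fin m → Fin n),
    f ∈ Δ k m → g ∈ Δ m n → g ∘ f ∈ Δ k n
  coprod_mem : ∀ {m₁ n₁ m₂ n₂ : ℕ} (f : Fin m₁ → Fin n₁) (g : Fin m₂ → Fin n₂),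
    f ∈ Δ m₁ n₁ → g ∈ Δ m₂ n₂ → coprodMap f g ∈ Δ (m₁ + m₂) (n₁ + n₂)
  sim_mem : ∀ {m n : ℕ} (θ : Fin m → Fin n), θ ∈ Δ m n → ∀ k : Fin n → ℕ,
    simComp θ k ∈ Δ (∑ i, k (θ i)) (∑ j, k j)

/-- A structure monoid: a subset of ℕ containing 1 and closed under `I`-indexed sums. -/
def IsStructMonoid (I : Set ℕ) : Prop :=
  1 ∈ I ∧ ∀ k ∈ I, ∀ a : Fin k → ℕ, (∀ i, a i ∈ I) → (∑ i, a i) ∈ I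

/-- `Δ^I` : functions all of whose fibers have cardinality in `I`. -/
def DeltaUp (I : Set ℕ) : ∀ m n : ℕ, Set (Fin m → Fin n) :=
  fun _ _ => {f | ∀ i, fiberCard f i ∈ I}

/-- The unique map `[n] → [1]`. -/
def bang (n : ℕ) : Fin n → Fin 1 := fun _ => 0

/-- `Δ_I` : the smallest structure category containing the maps `[n] → [1]` for `n ∈ I`. -/
def GenDelta (I : Set ℕ) : ∀ m n : ℕ, Set (Fin m → Fin n) := fun m n =>
  {f | ∀ Δ : ∀ m n : ℕ, Set (Fin m → Fin n), IsStructCat Δ →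
    (∀ k ∈ I, bang k ∈ Δ k 1) → f ∈ Δ m n}
/-- A context structure on `V`: a relation between contexts (repetition-free words) and
words, reflexive on contexts, contained in letter-expression, closed under composition of
context assignments, and stable under substitution. -/
structure IsCtxStruct {V : Type} (R : List V → List V → Prop) : Prop where
  dom_nodup : ∀ {c v : List V}, R c v → c.Nodup
  refl : ∀ c : List V, c.Nodup → R c c
  mem : ∀ {c v : List V}, R c v → ∀ x ∈ v, x ∈ c
  compose : ∀ {c : List V} (ps : List (List V × List V)),
    R c (ps.map Prod.fst).flatten → (∀ p ∈ ps, R p.1 p.2) →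
    R c (ps.map Prod.snd).flatten
  subst : ∀ {c v d : List V} (s : V → List V),
    R c v → R d (c.map s).flatten → R d (v.map s).flatten

/-- A context structure is modelable if every context of a concatenation of words refines
into contexts of the individual words. -/
def Modelable {V : Type} (R : List V → List V → Prop) : Prop :=
  ∀ (c : List V) (vs : List (List V)), R c vs.flatten →
    ∃ cs : List (List V), R c cs.flatten ∧ List.Forall₂ R cs vs

/-- The structure category `Δ_R` associated to a context structure `R` (relative to a fixed
injection `e : ℕ → V`): `θ : [m] → [n]` lies in `Δ_R` iff `(c₁⋯cₙ) R (c_{θ(1)}⋯c_{θ(m)})`. -/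
def toCat {V : Type} (e : ℕ → V) (R : List V → List V → Prop) :
    ∀ m n : ℕ, Set (Fin m → Fin n) := fun m n =>
  {θ | R (List.ofFn fun i : Fin n => e i.1) (List.ofFn fun i : Fin m => e (θ i).1)}

/-- The context structure `R_Δ` associated to a structure category `Δ`: `c R_Δ v` iff `c`
is a context and `v = c_{θ(1)}⋯c_{θ(m)}` for some `θ` in `Δ`. -/
def toCtx {V : Type} (Δ : ∀ m n : ℕ, Set (Fin m → Fin n)) :
    List V → List V → Prop := fun c v =>
  c.Nodup ∧ ∃ θ : Fin v.length → Fin c.length,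
    θ ∈ Δ v.length c.length ∧ v = List.ofFn fun i => c.get (θ i)
/-- Terms of a multisorted signature with sorts `S`, function symbols `F` (with domain
`dom` and codomain `cod`), and variables `S × ℕ` (countably many of each sort). -/
inductive Tm (S : Type) (F : Type) (dom : F → List S) (cod : F → S) : S → Type
  | var (s : S) (k : ℕ) : Tm S F dom cod s
  | app (f : F) (args : (i : Fin (dom f).length) → Tm S F dom cod ((dom f).get i)) :
      Tm S F dom cod (cod f)

/-- The left-to-right sequence `τ(t)` of variable occurrences in a term. -/
def varSeq {S F : Type} {dom : F → List S} {cod : F → S} :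
    ∀ {s : S}, Tm S F dom cod s → List (S × ℕ)
  | _, .var s k => [(s, k)]
  | _, .app _ args => (List.ofFn fun i => varSeq (args i)).flatten

/-- Simultaneous (type-preserving) substitution of terms for variables. -/
def rename {S F : Type} {dom : F → List S} {cod : F → S}
    (σ : (x : S × ℕ) → Tm S F dom cod x.1) :
    ∀ {s : S}, Tm S F dom cod s → Tm S F dom cod s
  | _, .var s k => σ (s, k)
  | _, .app f args => .app f fun i => rename σ (args i)

theorem varSeq_rename {S F : Type} {dom : F → List S} {cod : F → S}
    (σ : (x : S × ℕ) → Tm S F dom cod x.1) :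
    ∀ {s : S} (t : Tm S F dom cod s),
      varSeq (rename σ t) = ((varSeq t).map fun x => varSeq (σ x)).flatten
  | _, .var s k => by simp [varSeq, rename]
  | _, .app f args => by
    simp only [varSeq, rename, List.map_flatten, List.flatten_flatten, List.map_ofFn]
    congr 1
    exact congrArg List.ofFn (funext fun i => by
      simp [Function.comp, varSeq_rename σ (args i)])

/-- If `t` has `R`-context `v` and `(s, w, (wᵢ)ᵢ)` is an `R`-renaming of the variables of
`v`, then `w` is an `R`-context for the substituted term `s(t)`. -/
theorem stmt_16 {S F : Type} (dom : F → List S) (cod : F → S)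
    (R : List (S × ℕ) → List (S × ℕ) → Prop) (hR : IsCtxStruct R)
    {s : S} (t : Tm S F dom cod s) (v : List (S × ℕ)) (hv : R v (varSeq t))
    (σ : (x : S × ℕ) → Tm S F dom cod x.1)
    (w : List (S × ℕ)) (ws : List (List (S × ℕ)))
    (hws : List.Forall₂ (fun x wx => R wx (varSeq (σ x))) v ws)
    (hw : R w ws.flatten) :
    R w (varSeq (rename σ t)) := by
  rw [varSeq_rename]
  set g : S × ℕ → List (S × ℕ) := fun x => varSeq (σ x) with hg
  have hlen : ws.length = v.length := (List.Forall₂.length_eq hws).symm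
  set ps : List (List (S × ℕ) × List (S × ℕ)) := List.zip ws (v.map g) with hpsdef
  have h1 : ps.map Prod.fst = ws := by
    rw [hpsdef, List.map_fst_zip]
    simp [hlen]
  have h2 : ps.map Prod.snd = v.map g := by
    rw [hpsdef, List.map_snd_zip]
    simp [hlen]
  have hps : ∀ p ∈ ps, R p.1 p.2 := by
    intro p hp
    rw [hpsdef, List.zip_map_right] at hp
    obtain ⟨⟨a, b⟩, hab, rfl⟩ := List.mem_map.mp hp
    have hba : (b, a) ∈ List.zip v ws := by
      rw [← List.zip_swap]
      exact List.mem_map.mpr ⟨(a, b), hab, rfl⟩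
    exact (List.forall₂_iff_zip.mp hws).2 hba
  have hmid : R w ((v.map g).flatten) := by
    rw [← h2]
    exact hR.compose ps (by rwa [h1]) hps
  exact hR.subst g hv hmid
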